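/- arXiv:2005.04773 — 2 statements merged into one kernel-verified Lean document; each statement's English description precedes it below -/
import Mathlib

section
/- For any real number x with 0 ≤ x ≤ 1 - 1/d (where d ≥ 2 is a natural number) and any natural number n, the number of strings i in {0,1,...,d-1}^n whose relative Hamming weight (fraction of nonzero coordinates) is at most x is at most d^(n·h_d(x)), where h_d(x) = x·log_d(d-1) - x·log_d(x) - (1-x)·log_d(1-x) is the d-ary entropy function (with the convention 0·log 0 = 0). -/
open scoped Classical

/-- d-ary entropy function (convention `0 * log 0 = 0` is automatic since `Real.log 0 = 0`). -/
noncomputable def hEnt (d : ℕ) (x : ℝ) : ℝ :=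
  x * Real.logb d (d - 1) - x * Real.logb d x - (1 - x) * Real.logb d (1 - x)

/-- relative Hamming weight of a string over the alphabet `{0, ..., d-1}`. -/
noncomputable def relWt {n d : ℕ} (q : Fin n → Fin d) : ℝ :=
  ((Finset.univ.filter fun ℓ => (q ℓ : ℕ) ≠ 0).card : ℝ) / n

theorem hamming_ball_bound (d n : ℕ) (hd : 2 ≤ d) (x : ℝ) (hx0 : 0 ≤ x)
    (hx1 : x ≤ 1 - 1 / d) :
    ((Finset.univ.filter fun i : Fin n → Fin d => relWt i ≤ x).card : ℝ) ≤
      (d : ℝ) ^ ((n : ℝ) * hEnt d x) := by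
  have hd1 : (1:ℝ) < d := by exact_mod_cast Nat.lt_of_lt_of_le one_lt_two hd
  have hd0 : (0:ℝ) < d := by linarith
  have hdm1 : (0:ℝ) < (d:ℝ) - 1 := by linarith
  have hdne1 : (d:ℝ) ≠ 1 := ne_of_gt hd1
  have hx1' : x < 1 := by
    have : (0:ℝ) < 1/d := by positivity
    linarith
  rcases eq_or_lt_of_le hx0 with h0 | hxpos
  · -- x = 0 case
    have hx : x = 0 := h0.symm
    subst hx
    have hEnt0 : hEnt d 0 = 0 := by simp [hEnt]
    rw [hEnt0, mul_zero, Real.rpow_zero]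
    have hcard : (Finset.univ.filter fun i : Fin n → Fin d => relWt i ≤ 0).card ≤ 1 := by
      apply Finset.card_le_one.mpr
      intro g hg g' hg'
      simp only [Finset.mem_filter] at hg hg'
      have hz : ∀ h : Fin n → Fin d, relWt h ≤ 0 → ∀ ℓ, (h ℓ : ℕ) = 0 := by
        intro h hh ℓ
        rcases Nat.eq_zero_or_pos n with hn | hn
        · exact absurd ℓ.2 (by omega)
        · have hn0 : (0:ℝ) < n := by exact_mod_cast hn
          rw [relWt, div_le_iff₀ hn0, zero_mul] at hh
          have hge : (0:ℝ) ≤ ((Finset.univ.filter fun ℓ => (h ℓ : ℕ) ≠ 0).card : ℝ) := by positivity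
          have : ((Finset.univ.filter fun ℓ => (h ℓ : ℕ) ≠ 0).card : ℝ) = 0 := le_antisymm hh hge
          have hc0 : (Finset.univ.filter fun ℓ => (h ℓ : ℕ) ≠ 0).card = 0 := by exact_mod_cast this
          rw [Finset.card_eq_zero] at hc0
          by_contra hne
          have : ℓ ∈ Finset.univ.filter fun ℓ => (h ℓ : ℕ) ≠ 0 := by simp [hne]
          rw [hc0] at this
          exact absurd this (Finset.notMem_empty ℓ)
      funext ℓ
      exact Fin.ext ((hz g hg.2 ℓ).trans (hz g' hg'.2 ℓ).symm)
    exact_mod_cast hcard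
  · set a : ℝ := x / ((d:ℝ) - 1) with ha_def
    set b : ℝ := 1 - x with hb_def
    have ha0 : 0 < a := by positivity
    have hb0 : 0 < b := by simp [hb_def]; linarith
    have hab : a ≤ b := by
      rw [div_le_iff₀ hdm1]
      have : x * d ≤ (d:ℝ) - 1 := by
        have := mul_le_mul_of_nonneg_right hx1 (le_of_lt hd0)
        calc x * d ≤ (1 - 1/(d:ℝ)) * d := this
        _ = d - 1 := by field_simp
      nlinarith
    -- f : Fin d → ℝ
    set f : Fin d → ℝ := fun c => if (c:ℕ) = 0 then b else a with hf_def
    have hsum : ∑ c : Fin d, f c = 1 := by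
      have : ∑ c : Fin d, f c = ∑ c : Fin d, (a + if (c:ℕ) = 0 then b - a else 0) := by
        apply Finset.sum_congr rfl
        intro c _
        by_cases h : (c:ℕ) = 0 <;> simp [hf_def, h]
      rw [this, Finset.sum_add_distrib, Finset.sum_const, Finset.card_univ, Fintype.card_fin]
      have h2 : ∑ c : Fin d, (if (c:ℕ) = 0 then b - a else 0) = b - a := by
        have hdpos : 0 < d := by omega
        rw [Finset.sum_eq_single (⟨0, hdpos⟩ : Fin d)]
        · simp
        · intro c _ hc
          have : (c:ℕ) ≠ 0 := by
            intro h; apply hc; exact Fin.ext h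
          simp [this]
        · simp
      rw [h2, nsmul_eq_mul, ha_def, hb_def]
      field_simp
      ring
    have key : ∑ g : Fin n → Fin d, ∏ ℓ, f (g ℓ) = 1 := by
      rw [← Fintype.sum_pow, hsum, one_pow]
    -- each term: for g, ∏ = b^(n - w) * a^w
    have hterm : ∀ g : Fin n → Fin d,
        ∏ ℓ, f (g ℓ) = b ^ ((n : ℕ) - (Finset.univ.filter fun ℓ => (g ℓ : ℕ) ≠ 0).card)
          * a ^ (Finset.univ.filter fun ℓ => (g ℓ : ℕ) ≠ 0).card := by
      intro g
      rw [← Finset.prod_filter_mul_prod_filter_not Finset.univ (fun ℓ => (g ℓ : ℕ) ≠ 0),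
        mul_comm]
      have h1 : ∏ ℓ ∈ Finset.univ.filter (fun ℓ => ¬((g ℓ : ℕ) ≠ 0)), f (g ℓ)
          = b ^ ((n : ℕ) - (Finset.univ.filter fun ℓ => (g ℓ : ℕ) ≠ 0).card) := by
        rw [Finset.prod_congr rfl (fun ℓ hℓ => show f (g ℓ) = b by
          simp only [Finset.mem_filter, not_not] at hℓ; simp [hf_def, hℓ.2]),
          Finset.prod_const]
        congr 1
        rw [Finset.filter_not, Finset.card_sdiff_of_subset (Finset.filter_subset _ _)]
        simp
      have h2 : ∏ ℓ ∈ Finset.univ.filter (fun ℓ => (g ℓ : ℕ) ≠ 0), f (g ℓ)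
          = a ^ (Finset.univ.filter fun ℓ => (g ℓ : ℕ) ≠ 0).card := by
        rw [Finset.prod_congr rfl (fun ℓ hℓ => show f (g ℓ) = a by
          simp only [Finset.mem_filter] at hℓ; simp [hf_def, hℓ.2]),
          Finset.prod_const]
      rw [h1, h2]
    -- lower bound for terms in ball
    set A : ℝ := b ^ ((n:ℝ) * (1 - x)) * a ^ ((n:ℝ) * x) with hA_def
    have hA0 : 0 < A := by positivity
    have hbound : ∀ g : Fin n → Fin d, relWt g ≤ x → A ≤ ∏ ℓ, f (g ℓ) := by
      intro g hg
      set w : ℕ := (Finset.univ.filter fun ℓ => (g ℓ : ℕ) ≠ 0).card with hw_def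
      have hwn : w ≤ n := by
        calc w ≤ Finset.univ.card := Finset.card_filter_le _ _
        _ = n := by simp
      have hwx : (w:ℝ) ≤ (n:ℝ) * x := by
        rcases Nat.eq_zero_or_pos n with hn | hn
        · subst hn
          have : w = 0 := Nat.le_zero.mp hwn
          simp [this]
        · have hn0 : (0:ℝ) < n := by exact_mod_cast hn
          rw [relWt, div_le_iff₀ hn0] at hg
          linarith [hg]
      rw [hterm g, ← hw_def]
      have hcast : ((n - w : ℕ) : ℝ) = (n:ℝ) - w := by
        rw [Nat.cast_sub hwn]
      -- convert to rpow
      rw [← Real.rpow_natCast b (n - w), ← Real.rpow_natCast a w, hcast]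
      have hrw : b ^ ((n:ℝ) - w) * a ^ (w:ℝ) = b ^ (n:ℝ) * (a / b) ^ (w:ℝ) := by
        rw [Real.div_rpow ha0.le hb0.le, Real.rpow_sub hb0]
        field_simp
      have hrw2 : A = b ^ (n:ℝ) * (a / b) ^ ((n:ℝ) * x) := by
        rw [hA_def, Real.div_rpow ha0.le hb0.le]
        rw [show (n:ℝ) * (1 - x) = (n:ℝ) - (n:ℝ)*x by ring, Real.rpow_sub hb0]
        field_simp
      rw [hrw, hrw2]
      apply mul_le_mul_of_nonneg_left _ (by positivity)
      apply Real.rpow_le_rpow_of_exponent_ge (by positivity) _ hwx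
      rw [div_le_one hb0]
      exact hab
    -- sum over ball
    have hball : ((Finset.univ.filter fun i : Fin n → Fin d => relWt i ≤ x).card : ℝ) * A ≤ 1 := by
      rw [← key]
      calc ((Finset.univ.filter fun i : Fin n → Fin d => relWt i ≤ x).card : ℝ) * A
          = ∑ g ∈ Finset.univ.filter (fun i : Fin n → Fin d => relWt i ≤ x), A := by
            rw [Finset.sum_const, nsmul_eq_mul]
        _ ≤ ∑ g ∈ Finset.univ.filter (fun i : Fin n → Fin d => relWt i ≤ x), ∏ ℓ, f (g ℓ) := by
            apply Finset.sum_le_sum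
            intro g hg
            simp only [Finset.mem_filter] at hg
            exact hbound g hg.2
        _ ≤ ∑ g : Fin n → Fin d, ∏ ℓ, f (g ℓ) := by
            apply Finset.sum_le_sum_of_subset_of_nonneg (Finset.filter_subset _ _)
            intro g _ _
            apply Finset.prod_nonneg
            intro ℓ _
            by_cases h : ((g ℓ : ℕ)) = 0 <;> simp [hf_def, h] <;> positivity
    -- final: A = (d ^ (n * hEnt d x))⁻¹
    have hAinv : A * (d:ℝ) ^ ((n:ℝ) * hEnt d x) = 1 := by
      have hA_eq : A = (d:ℝ) ^ (Real.logb d b * ((n:ℝ) * (1 - x))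
          + Real.logb d a * ((n:ℝ) * x)) := by
        rw [Real.rpow_add hd0, hA_def, Real.rpow_mul hd0.le, Real.rpow_mul hd0.le,
          Real.rpow_logb hd0 hdne1 hb0, Real.rpow_logb hd0 hdne1 ha0]
      have hla : Real.logb d a = Real.logb d x - Real.logb d ((d:ℝ) - 1) := by
        rw [ha_def, Real.logb_div (ne_of_gt hxpos) (ne_of_gt hdm1)]
      have hexp : Real.logb d b * ((n:ℝ) * (1 - x)) + Real.logb d a * ((n:ℝ) * x)
          + (n:ℝ) * hEnt d x = 0 := by
        unfold hEnt
        rw [hla, hb_def]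
        ring
      rw [hA_eq, ← Real.rpow_add hd0, hexp, Real.rpow_zero]
    have hDpos : (0:ℝ) < (d:ℝ) ^ ((n:ℝ) * hEnt d x) := Real.rpow_pos_of_pos hd0 _
    have hDA : (d:ℝ) ^ ((n:ℝ) * hEnt d x) = A⁻¹ := by
      field_simp at hAinv ⊢
      linarith [hAinv]
    rw [hDA, ← one_div, le_div_iff₀ hA0]
    linarith [hball]
end

section
/- Consider the sampling strategy that, given a string q ∈ {0,...,d-1}^(n+m) with m < n, picks a uniformly random subset t ⊆ {1,...,n+m} of size m and outputs w(q_t) as an estimate of w(q_{-t}). Then for every δ > 0 and every fixed q, the probability over t that |w(q_t) - w(q_{-t})| > δ is at most 2·exp(-δ²·m·(n+m)/(m+n+2)). -/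
open scoped Classical

/-- relative Hamming weight of the substring of `q` indexed by the finite set `s`. -/
noncomputable def wOn {N d : ℕ} (q : Fin N → Fin d) (s : Finset (Fin N)) : ℝ :=
  ((s.filter fun ℓ => (q ℓ : ℕ) ≠ 0).card : ℝ) / s.card

section Aux
open Finset Real

variable {N : ℕ}


private lemma denom_pos {p : ℝ} (hp0 : 0 ≤ p) (hp1 : p ≤ 1) (s : ℝ) :
    0 < 1 - p + p * Real.exp s := by
  rcases hp0.eq_or_lt with h | h
  · simp [← h]
  · have := Real.exp_pos s
    nlinarith

private lemma hoeffding_core {p : ℝ} (hp0 : 0 ≤ p) (hp1 : p ≤ 1) (s : ℝ) :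
    (1 - p) * Real.exp (-(s * p)) + p * Real.exp (s * (1 - p)) ≤ Real.exp (s ^ 2 / 8) := by
  set h : ℝ → ℝ := fun x => x ^ 2 / 8 + p * x - Real.log (1 - p + p * Real.exp x) with hh
  set h' : ℝ → ℝ := fun x => x / 4 + p - p * Real.exp x / (1 - p + p * Real.exp x) with hh'
  set h'' : ℝ → ℝ := fun x =>
    1 / 4 - p * Real.exp x * (1 - p) / (1 - p + p * Real.exp x) ^ 2 with hh''
  have hd : ∀ x, HasDerivAt h (h' x) x := by
    intro x
    have h1 : HasDerivAt (fun x : ℝ => 1 - p + p * Real.exp x) (p * Real.exp x) x := by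
      simpa using (((Real.hasDerivAt_exp x).const_mul p).const_add (1 - p))
    have h2 : HasDerivAt (fun x : ℝ => Real.log (1 - p + p * Real.exp x))
        (p * Real.exp x / (1 - p + p * Real.exp x)) x :=
      h1.log (denom_pos hp0 hp1 x).ne'
    have h3 : HasDerivAt (fun x : ℝ => x ^ 2 / 8 + p * x) (x / 4 + p) x := by
      have := ((hasDerivAt_pow 2 x).div_const 8).add ((hasDerivAt_id x).const_mul p)
      simpa [mul_comm, Pi.add_def] using this.congr_deriv (by ring)
    simpa [hh, hh', Pi.sub_def] using h3.sub h2
  have hd' : ∀ x, HasDerivAt h' (h'' x) x := by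
    intro x
    have h1 : HasDerivAt (fun x : ℝ => 1 - p + p * Real.exp x) (p * Real.exp x) x := by
      simpa using (((Real.hasDerivAt_exp x).const_mul p).const_add (1 - p))
    have h2 : HasDerivAt (fun x : ℝ => p * Real.exp x) (p * Real.exp x) x :=
      (Real.hasDerivAt_exp x).const_mul p
    have h4 : HasDerivAt (fun x : ℝ => p * Real.exp x / (1 - p + p * Real.exp x))
        ((p * Real.exp x * (1 - p + p * Real.exp x) - p * Real.exp x * (p * Real.exp x)) /
          (1 - p + p * Real.exp x) ^ 2) x := h2.div h1 (denom_pos hp0 hp1 x).ne'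
    have h3 : HasDerivAt (fun x : ℝ => x / 4 + p) (1 / 4) x := by
      simpa using ((hasDerivAt_id x).div_const 4).add_const p
    have := h3.sub h4
    refine HasDerivAt.congr_deriv (f := h') this ?_
    rw [hh'']
    field_simp
    ring
  have hpos : ∀ x, 0 ≤ h'' x := by
    intro x
    have hD := denom_pos hp0 hp1 x
    have he := Real.exp_pos x
    rw [hh'']
    have key : 4 * (p * Real.exp x * (1 - p)) ≤ (1 - p + p * Real.exp x) ^ 2 := by
      nlinarith [sq_nonneg (1 - p - p * Real.exp x)]
    have : p * Real.exp x * (1 - p) / (1 - p + p * Real.exp x) ^ 2 ≤ 1 / 4 := by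
      rw [div_le_div_iff₀ (by positivity) (by norm_num)]
      nlinarith
    linarith
  have h'mono : Monotone h' := by
    refine monotone_of_deriv_nonneg (fun x => (hd' x).differentiableAt) (fun x => ?_)
    rw [(hd' x).deriv]; exact hpos x
  have h'zero : h' 0 = 0 := by
    rw [hh']; simp
  have hnonneg : ∀ x, 0 ≤ h x := by
    have hzero : h 0 = 0 := by rw [hh]; simp
    have hcont : Continuous h := by
      refine Continuous.sub (by continuity) ?_
      exact (continuous_const.add (continuous_const.mul Real.continuous_exp)).log
        (fun x => (denom_pos hp0 hp1 x).ne')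
    intro x
    rcases le_or_gt 0 x with hx | hx
    · have : MonotoneOn h (Set.Ici 0) := by
        refine monotoneOn_of_deriv_nonneg (convex_Ici 0) hcont.continuousOn
          (fun y _ => (hd y).differentiableAt.differentiableWithinAt) (fun y hy => ?_)
        rw [(hd y).deriv]
        have : (0:ℝ) ≤ y := le_of_lt (by simpa using hy)
        calc (0:ℝ) = h' 0 := h'zero.symm
        _ ≤ h' y := h'mono this
      have := this Set.self_mem_Ici (Set.mem_Ici.mpr hx) hx
      linarith [hzero ▸ this]
    · have : AntitoneOn h (Set.Iic 0) := by
        refine antitoneOn_of_deriv_nonpos (convex_Iic 0) hcont.continuousOn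
          (fun y _ => (hd y).differentiableAt.differentiableWithinAt) (fun y hy => ?_)
        rw [(hd y).deriv]
        have hy0 : y ≤ 0 := le_of_lt (by simpa using hy)
        calc h' y ≤ h' 0 := h'mono hy0
        _ = 0 := h'zero
      have := this (Set.mem_Iic.mpr hx.le) Set.self_mem_Iic hx.le
      linarith [hzero ▸ this]
  -- deduce the inequality
  have hD := denom_pos hp0 hp1 s
  have hlog : Real.log (1 - p + p * Real.exp s) ≤ s ^ 2 / 8 + p * s := by
    have := hnonneg s
    rw [hh] at this; linarith
  have := Real.exp_le_exp.mpr hlog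
  rw [Real.exp_log hD] at this
  have expand : (1 - p) * Real.exp (-(s * p)) + p * Real.exp (s * (1 - p))
      = Real.exp (-(s * p)) * (1 - p + p * Real.exp s) := by
    have hsplit : Real.exp (s * (1 - p)) = Real.exp (-(s * p)) * Real.exp s := by
      rw [← Real.exp_add]; ring_nf
    rw [hsplit]; ring
  rw [expand]
  calc Real.exp (-(s * p)) * (1 - p + p * Real.exp s)
      ≤ Real.exp (-(s * p)) * Real.exp (s ^ 2 / 8 + p * s) := by
        exact mul_le_mul_of_nonneg_left this (Real.exp_nonneg _)
    _ = Real.exp (s ^ 2 / 8) := by rw [← Real.exp_add]; ring_nf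

private lemma hoeffding_two_point {p : ℝ} (hp0 : 0 ≤ p) (hp1 : p ≤ 1) (z0 z1 c : ℝ) :
    (1 - p) * Real.exp (c * z0) + p * Real.exp (c * z1) ≤
      Real.exp (c * ((1 - p) * z0 + p * z1) + c ^ 2 * (z1 - z0) ^ 2 / 8) := by
  set s := c * (z1 - z0) with hs
  set mu := (1 - p) * z0 + p * z1 with hmu
  have e0 : c * z0 = c * mu + -(s * p) := by rw [hmu, hs]; ring
  have e1 : c * z1 = c * mu + s * (1 - p) := by rw [hmu, hs]; ring
  rw [e0, e1, Real.exp_add, Real.exp_add]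
  have : Real.exp (c * mu + c ^ 2 * (z1 - z0) ^ 2 / 8)
      = Real.exp (c * mu) * Real.exp (s ^ 2 / 8) := by
    rw [← Real.exp_add, hs]; ring_nf
  rw [this]
  have := hoeffding_core hp0 hp1 s
  nlinarith [Real.exp_pos (c * mu)]


private lemma pair_sum (k : ℕ) (f : Finset (Fin N) → ℝ) :
    ∑ t ∈ powersetCard (k + 1) (univ : Finset (Fin N)), (k + 1 : ℝ) * f t
      = ∑ s ∈ powersetCard k (univ : Finset (Fin N)), ∑ i ∈ sᶜ, f (insert i s) := by
  have lhs_eq : ∀ t ∈ powersetCard (k + 1) (univ : Finset (Fin N)),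
      (k + 1 : ℝ) * f t = ∑ _i ∈ t, f t := by
    intro t ht
    rw [Finset.sum_const, (Finset.mem_powersetCard.mp ht).2]
    simp [nsmul_eq_mul]
  rw [Finset.sum_congr rfl lhs_eq]
  rw [Finset.sum_sigma' (powersetCard (k + 1) (univ : Finset (Fin N))) (fun t => t)
    (fun t _ => f t)]
  rw [Finset.sum_sigma' (powersetCard k (univ : Finset (Fin N))) (fun s => sᶜ)
    (fun s i => f (insert i s))]
  refine Finset.sum_bij' (fun p _ => (⟨p.1.erase p.2, p.2⟩ : Σ _ : Finset (Fin N), Fin N))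
    (fun p _ => (⟨insert p.2 p.1, p.2⟩ : Σ _ : Finset (Fin N), Fin N)) ?_ ?_ ?_ ?_ ?_
  · rintro ⟨t, i⟩ hp
    rw [Finset.mem_sigma] at hp ⊢
    obtain ⟨ht, hi⟩ := hp
    rw [Finset.mem_powersetCard] at ht
    refine ⟨Finset.mem_powersetCard.mpr ⟨subset_univ _, ?_⟩, ?_⟩
    · rw [Finset.card_erase_of_mem hi, ht.2]; rfl
    · simp
  · rintro ⟨s, i⟩ hp
    rw [Finset.mem_sigma] at hp ⊢
    obtain ⟨hs, hi⟩ := hp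
    rw [Finset.mem_powersetCard] at hs
    have hnotmem : i ∉ s := by simpa using hi
    refine ⟨Finset.mem_powersetCard.mpr ⟨subset_univ _, ?_⟩, Finset.mem_insert_self _ _⟩
    rw [Finset.card_insert_of_notMem hnotmem, hs.2]
  · rintro ⟨t, i⟩ hp
    rw [Finset.mem_sigma] at hp
    simp [Finset.insert_erase hp.2]
  · rintro ⟨s, i⟩ hp
    rw [Finset.mem_sigma] at hp
    have : i ∉ s := by simpa using hp.2
    simp [Finset.erase_insert this]
  · rintro ⟨t, i⟩ hp
    rw [Finset.mem_sigma] at hp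
    simp [Finset.insert_erase hp.2]

private lemma branch_sum (A s : Finset (Fin N)) (g : ℕ → ℝ) :
    ∑ i ∈ sᶜ, g ((insert i s ∩ A).card)
      = ((sᶜ ∩ A).card : ℝ) * g ((s ∩ A).card + 1)
        + ((sᶜ.card - (sᶜ ∩ A).card : ℝ)) * g ((s ∩ A).card) := by
  classical
  rw [← Finset.sum_filter_add_sum_filter_not sᶜ (fun i => i ∈ A)]
  have h1 : ∀ i ∈ sᶜ.filter (fun i => i ∈ A),
      g ((insert i s ∩ A).card) = g ((s ∩ A).card + 1) := by
    intro i hi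
    rw [Finset.mem_filter, Finset.mem_compl] at hi
    rw [Finset.insert_inter_of_mem hi.2,
      Finset.card_insert_of_notMem (fun h => hi.1 (Finset.mem_inter.mp h).1)]
  have h2 : ∀ i ∈ sᶜ.filter (fun i => i ∉ A),
      g ((insert i s ∩ A).card) = g ((s ∩ A).card) := by
    intro i hi
    rw [Finset.mem_filter] at hi
    rw [Finset.insert_inter_of_notMem hi.2]
  rw [Finset.sum_congr rfl h1, Finset.sum_congr rfl h2, Finset.sum_const, Finset.sum_const]
  have e1 : sᶜ.filter (fun i => i ∈ A) = sᶜ ∩ A := by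
    ext i; simp [Finset.mem_inter]
  have e2 : (sᶜ.filter (fun i => i ∉ A)).card = sᶜ.card - (sᶜ ∩ A).card := by
    rw [← e1, Finset.filter_not, Finset.card_sdiff_of_subset (Finset.filter_subset _ _)]
  rw [e1, e2, nsmul_eq_mul, nsmul_eq_mul]
  have hle : (sᶜ ∩ A).card ≤ sᶜ.card := Finset.card_le_card (Finset.inter_subset_left)
  push_cast [hle]
  ring

noncomputable def Zf (A : Finset (Fin N)) (k : ℕ) (t : Finset (Fin N)) : ℝ :=
  (((t ∩ A).card : ℝ) - k * A.card / N) / (N - k)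

noncomputable def Mgf (A : Finset (Fin N)) (k : ℕ) (c : ℝ) : ℝ :=
  ∑ t ∈ powersetCard k (univ : Finset (Fin N)), Real.exp (c * Zf A k t)



private lemma step_bound (A : Finset (Fin N)) (k : ℕ) (hk : k + 1 < N) (c : ℝ)
    (s : Finset (Fin N)) (hs : s ∈ powersetCard k (univ : Finset (Fin N))) :
    ∑ i ∈ sᶜ, Real.exp (c * Zf A (k + 1) (insert i s)) ≤
      ((N : ℝ) - k) * Real.exp (c * Zf A k s + c ^ 2 * (1 / ((N : ℝ) - (k + 1))) ^ 2 / 8) := by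
  classical
  have hsc : s.card = k := (Finset.mem_powersetCard.mp hs).2
  have hcompl : sᶜ.card = N - k := by
    rw [Finset.card_compl, hsc]; simp
  have hkN : k ≤ N := le_of_lt (by omega)
  have hcomplR : ((sᶜ.card : ℝ)) = (N : ℝ) - k := by rw [hcompl]; push_cast [hkN]; ring
  set x := (s ∩ A).card with hx
  set y := (sᶜ ∩ A).card with hy
  set K := A.card with hK
  have hxyK : x + y = K := by
    have h1 : (A ∩ s).card + (A \ s).card = A.card := Finset.card_inter_add_card_sdiff A s
    have e1 : A ∩ s = s ∩ A := Finset.inter_comm A s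
    have e2 : A \ s = sᶜ ∩ A := by ext i; simp [Finset.mem_sdiff, and_comm]
    rw [e1, e2] at h1
    exact h1
  have hyle : y ≤ N - k := by
    rw [← hcompl]; exact Finset.card_le_card Finset.inter_subset_left
  -- rewrite the sum
  have hrw : ∑ i ∈ sᶜ, Real.exp (c * Zf A (k + 1) (insert i s))
      = (y : ℝ) * Real.exp (c * (((x : ℝ) + 1 - (k + 1) * K / N) / ((N : ℝ) - (k + 1))))
        + (((N : ℝ) - k) - y) *
          Real.exp (c * (((x : ℝ) - (k + 1) * K / N) / ((N : ℝ) - (k + 1)))) := by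
    have := branch_sum A s
      (fun z => Real.exp (c * (((z : ℝ) - (k + 1) * K / N) / ((N : ℝ) - (k + 1)))))
    rw [show (∑ i ∈ sᶜ, Real.exp (c * Zf A (k + 1) (insert i s)))
        = ∑ i ∈ sᶜ, (fun z => Real.exp (c * (((z : ℝ) - (k + 1) * K / N) /
            ((N : ℝ) - (k + 1))))) ((insert i s ∩ A).card) from by
      apply Finset.sum_congr rfl; intro i _; rw [Zf, ← hK]; push_cast; ring_nf]
    rw [this, hcomplR, ← hx, ← hy]
    push_cast
    ring_nf
  rw [hrw]
  have hNk1 : (0 : ℝ) < (N : ℝ) - k := by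
    have : (k : ℝ) < N := by exact_mod_cast lt_trans (by omega) hk
    linarith
  have hNk2 : (0 : ℝ) < (N : ℝ) - (k + 1) := by
    have : ((k + 1 : ℕ) : ℝ) < N := by exact_mod_cast hk
    push_cast at this; linarith
  set p := (y : ℝ) / ((N : ℝ) - k) with hp
  have hp0 : 0 ≤ p := by positivity
  have hp1 : p ≤ 1 := by
    rw [hp, div_le_one hNk1]
    calc (y : ℝ) ≤ ((N - k : ℕ) : ℝ) := by exact_mod_cast hyle
    _ = (N : ℝ) - k := by push_cast [hkN]; ring
  set z0 := ((x : ℝ) - (k + 1) * K / N) / ((N : ℝ) - (k + 1)) with hz0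
  set z1 := ((x : ℝ) + 1 - (k + 1) * K / N) / ((N : ℝ) - (k + 1)) with hz1
  have key := hoeffding_two_point hp0 hp1 z0 z1 c
  have hyval : (y : ℝ) = p * ((N : ℝ) - k) := by
    rw [hp]; field_simp
  have lhs_eq : (y : ℝ) * Real.exp (c * z1) + (((N : ℝ) - k) - y) * Real.exp (c * z0)
      = ((N : ℝ) - k) * ((1 - p) * Real.exp (c * z0) + p * Real.exp (c * z1)) := by
    rw [hyval]; ring
  rw [lhs_eq]
  have hmartingale : (1 - p) * z0 + p * z1 = Zf A k s := by
    have hNpos : (0 : ℝ) < N := by exact_mod_cast Nat.zero_lt_of_lt hk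
    have hKval : (K : ℝ) = (x : ℝ) + y := by exact_mod_cast hxyK.symm
    rw [Zf, hz0, hz1, hp, ← hx, hKval]
    field_simp
    ring
  have hgap : (z1 - z0) ^ 2 = (1 / ((N : ℝ) - (k + 1))) ^ 2 := by
    rw [hz0, hz1]
    rw [div_sub_div_same]
    ring_nf
  have := mul_le_mul_of_nonneg_left key (le_of_lt hNk1)
  calc ((N : ℝ) - k) * ((1 - p) * Real.exp (c * z0) + p * Real.exp (c * z1))
      ≤ ((N : ℝ) - k) * Real.exp (c * ((1 - p) * z0 + p * z1) + c ^ 2 * (z1 - z0) ^ 2 / 8) :=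
        this
    _ = ((N : ℝ) - k) * Real.exp (c * Zf A k s + c ^ 2 * (1 / ((N : ℝ) - (k + 1))) ^ 2 / 8) := by
        rw [hmartingale, hgap]


private lemma mgf_le (A : Finset (Fin N)) (k : ℕ) (hk : k < N) (c : ℝ) :
    Mgf A k c ≤ (N.choose k : ℝ) *
      Real.exp (c ^ 2 / 8 * ∑ j ∈ Finset.Icc 1 k, (1 / ((N : ℝ) - j)) ^ 2) := by
  induction k with
  | zero =>
    rw [Mgf]
    simp [Zf]
  | succ k ih =>
    have hkN : k < N := by omega
    have ihk := ih hkN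
    have hstep : ∀ s ∈ powersetCard k (univ : Finset (Fin N)),
        ∑ i ∈ sᶜ, Real.exp (c * Zf A (k + 1) (insert i s)) ≤
          ((N : ℝ) - k) * Real.exp (c * Zf A k s + c ^ 2 * (1 / ((N : ℝ) - (k + 1))) ^ 2 / 8) :=
      fun s hs => step_bound A k hk c s hs
    have key : (k + 1 : ℝ) * Mgf A (k + 1) c ≤
        ((N : ℝ) - k) * Real.exp (c ^ 2 * (1 / ((N : ℝ) - (k + 1))) ^ 2 / 8) * Mgf A k c := by
      rw [Mgf, Finset.mul_sum]
      have := pair_sum k (fun t => Real.exp (c * Zf A (k + 1) t))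
      rw [show (∑ t ∈ powersetCard (k+1) (univ : Finset (Fin N)),
          (k + 1 : ℝ) * Real.exp (c * Zf A (k + 1) t))
          = ∑ s ∈ powersetCard k (univ : Finset (Fin N)),
            ∑ i ∈ sᶜ, Real.exp (c * Zf A (k + 1) (insert i s)) from this]
      calc ∑ s ∈ powersetCard k (univ : Finset (Fin N)),
            ∑ i ∈ sᶜ, Real.exp (c * Zf A (k + 1) (insert i s))
          ≤ ∑ s ∈ powersetCard k (univ : Finset (Fin N)),
            ((N : ℝ) - k) * Real.exp (c * Zf A k s + c ^ 2 * (1 / ((N : ℝ) - (k + 1))) ^ 2 / 8) :=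
            Finset.sum_le_sum hstep
        _ = ((N : ℝ) - k) * Real.exp (c ^ 2 * (1 / ((N : ℝ) - (k + 1))) ^ 2 / 8) * Mgf A k c := by
            rw [Mgf, Finset.mul_sum]
            apply Finset.sum_congr rfl
            intro s _
            rw [Real.exp_add]
            ring
    have hNk : (0 : ℝ) < (N : ℝ) - k := by
      have : (k : ℝ) < N := by exact_mod_cast hkN
      linarith
    have hchoose : ((N : ℝ) - k) * (N.choose k : ℝ) = (k + 1 : ℝ) * (N.choose (k + 1) : ℝ) := by
      have h := Nat.choose_succ_right_eq N k
      have hNkc : ((N - k : ℕ) : ℝ) = (N : ℝ) - k := by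
        push_cast [le_of_lt hkN]; ring
      have h2 := congrArg (Nat.cast (R := ℝ)) h
      push_cast [le_of_lt hkN] at h2
      linarith
    have hsum : c ^ 2 / 8 * ∑ j ∈ Finset.Icc 1 (k + 1), (1 / ((N : ℝ) - j)) ^ 2
        = c ^ 2 / 8 * ∑ j ∈ Finset.Icc 1 k, (1 / ((N : ℝ) - j)) ^ 2
          + c ^ 2 * (1 / ((N : ℝ) - (k + 1))) ^ 2 / 8 := by
      rw [Finset.sum_Icc_succ_top (by omega : 1 ≤ k + 1)]
      push_cast
      ring
    have hk1pos : (0 : ℝ) < (k + 1 : ℝ) := by positivity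
    rw [← mul_le_mul_iff_right₀ hk1pos]
    calc (k + 1 : ℝ) * Mgf A (k + 1) c
        ≤ ((N : ℝ) - k) * Real.exp (c ^ 2 * (1 / ((N : ℝ) - (k + 1))) ^ 2 / 8) * Mgf A k c :=
          key
      _ ≤ ((N : ℝ) - k) * Real.exp (c ^ 2 * (1 / ((N : ℝ) - (k + 1))) ^ 2 / 8) *
            ((N.choose k : ℝ) *
              Real.exp (c ^ 2 / 8 * ∑ j ∈ Finset.Icc 1 k, (1 / ((N : ℝ) - j)) ^ 2)) := by
          apply mul_le_mul_of_nonneg_left ihk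
          positivity
      _ = (k + 1 : ℝ) * ((N.choose (k + 1) : ℝ) *
            Real.exp (c ^ 2 / 8 * ∑ j ∈ Finset.Icc 1 (k + 1), (1 / ((N : ℝ) - j)) ^ 2)) := by
          rw [hsum, Real.exp_add]
          linear_combination (Real.exp (c ^ 2 * (1 / ((N : ℝ) - (k + 1))) ^ 2 / 8) *
            Real.exp (c ^ 2 / 8 * ∑ j ∈ Finset.Icc 1 k, (1 / ((N : ℝ) - j)) ^ 2)) * hchoose

private lemma count_le_mgf (A : Finset (Fin N)) (n : ℕ) (P : Finset (Fin N) → Prop)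
    [DecidablePred P] (c lam : ℝ)
    (h : ∀ t ∈ powersetCard n (univ : Finset (Fin N)), P t → c * lam ≤ c * Zf A n t) :
    (((powersetCard n (univ : Finset (Fin N))).filter P).card : ℝ) * Real.exp (c * lam)
      ≤ Mgf A n c := by
  rw [Mgf]
  calc (((powersetCard n (univ : Finset (Fin N))).filter P).card : ℝ) * Real.exp (c * lam)
      = ∑ _t ∈ (powersetCard n (univ : Finset (Fin N))).filter P, Real.exp (c * lam) := by
        rw [Finset.sum_const, nsmul_eq_mul]
    _ ≤ ∑ t ∈ (powersetCard n (univ : Finset (Fin N))).filter P, Real.exp (c * Zf A n t) :=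
        Finset.sum_le_sum fun t ht => Real.exp_le_exp.mpr
          (h t (Finset.mem_of_mem_filter t ht) (Finset.mem_filter.mp ht).2)
    _ ≤ ∑ t ∈ powersetCard n (univ : Finset (Fin N)), Real.exp (c * Zf A n t) :=
        Finset.sum_le_sum_of_subset_of_nonneg (Finset.filter_subset _ _)
          (fun t _ _ => (Real.exp_pos _).le)

private lemma two_sided_tail (A : Finset (Fin N)) (n : ℕ) (hn : n < N) (hn0 : 0 < n)
    (lam : ℝ) (hlam : 0 < lam) :
    (((powersetCard n (univ : Finset (Fin N))).filter fun t => lam < |Zf A n t|).card : ℝ)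
      ≤ 2 * (N.choose n : ℝ) *
        Real.exp (-2 * lam ^ 2 / ∑ j ∈ Finset.Icc 1 n, (1 / ((N : ℝ) - j)) ^ 2) := by
  classical
  set V := ∑ j ∈ Finset.Icc 1 n, (1 / ((N : ℝ) - j)) ^ 2 with hV
  have hVpos : 0 < V := by
    rw [hV]
    apply Finset.sum_pos
    · intro j hj
      rw [Finset.mem_Icc] at hj
      have : (j : ℝ) < N := by exact_mod_cast lt_of_le_of_lt hj.2 hn
      have : (0:ℝ) < (N:ℝ) - j := by linarith
      positivity
    · exact ⟨1, Finset.mem_Icc.mpr ⟨le_refl 1, hn0⟩⟩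
  set c := 4 * lam / V with hc
  have hcpos : 0 < c := by positivity
  have hexpo : c ^ 2 / 8 * V - c * lam = -2 * lam ^ 2 / V := by
    rw [hc]; field_simp; ring
  -- upper tail
  have hup : (((powersetCard n (univ : Finset (Fin N))).filter fun t =>
      lam ≤ Zf A n t).card : ℝ) ≤ (N.choose n : ℝ) * Real.exp (-2 * lam ^ 2 / V) := by
    have h1 := count_le_mgf A n (fun t => lam ≤ Zf A n t) c lam
      (fun t _ ht => mul_le_mul_of_nonneg_left ht hcpos.le)
    have h2 := mgf_le A n hn c
    have h3 := h1.trans h2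
    rw [← hV] at h3
    have hkey : (N.choose n : ℝ) * Real.exp (c ^ 2 / 8 * V)
        = ((N.choose n : ℝ) * Real.exp (-2 * lam ^ 2 / V)) * Real.exp (c * lam) := by
      rw [mul_assoc, ← Real.exp_add]
      congr 2
      linarith [hexpo]
    rw [hkey] at h3
    exact le_of_mul_le_mul_right h3 (Real.exp_pos _)
  -- lower tail
  have hdown : (((powersetCard n (univ : Finset (Fin N))).filter fun t =>
      Zf A n t ≤ -lam).card : ℝ) ≤ (N.choose n : ℝ) * Real.exp (-2 * lam ^ 2 / V) := by
    have h1 := count_le_mgf A n (fun t => Zf A n t ≤ -lam) (-c) (-lam)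
      (fun t _ ht => by nlinarith)
    have h2 := mgf_le A n hn (-c)
    have h3 := h1.trans h2
    have hsq : (-c) ^ 2 = c ^ 2 := by ring
    have hml : (-c) * (-lam) = c * lam := by ring
    rw [hsq, hml, ← hV] at h3
    have hkey : (N.choose n : ℝ) * Real.exp (c ^ 2 / 8 * V)
        = ((N.choose n : ℝ) * Real.exp (-2 * lam ^ 2 / V)) * Real.exp (c * lam) := by
      rw [mul_assoc, ← Real.exp_add]
      congr 2
      linarith [hexpo]
    rw [hkey] at h3
    exact le_of_mul_le_mul_right h3 (Real.exp_pos _)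
  -- combine
  have hsub : ((powersetCard n (univ : Finset (Fin N))).filter fun t => lam < |Zf A n t|)
      ⊆ ((powersetCard n (univ : Finset (Fin N))).filter fun t => lam ≤ Zf A n t)
        ∪ ((powersetCard n (univ : Finset (Fin N))).filter fun t => Zf A n t ≤ -lam) := by
    intro t ht
    rw [Finset.mem_filter] at ht
    rw [Finset.mem_union, Finset.mem_filter, Finset.mem_filter]
    rcases lt_abs.mp ht.2 with h | h
    · exact Or.inl ⟨ht.1, h.le⟩
    · exact Or.inr ⟨ht.1, by linarith⟩
  calc (((powersetCard n (univ : Finset (Fin N))).filter fun t => lam < |Zf A n t|).card : ℝ)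
      ≤ ((((powersetCard n (univ : Finset (Fin N))).filter fun t => lam ≤ Zf A n t)
          ∪ ((powersetCard n (univ : Finset (Fin N))).filter fun t => Zf A n t ≤ -lam)).card : ℝ) := by
        exact_mod_cast Nat.cast_le.mpr (Finset.card_le_card hsub)
    _ ≤ (((powersetCard n (univ : Finset (Fin N))).filter fun t => lam ≤ Zf A n t).card : ℝ)
        + (((powersetCard n (univ : Finset (Fin N))).filter fun t => Zf A n t ≤ -lam).card : ℝ) := by
        exact_mod_cast Finset.card_union_le _ _
    _ ≤ 2 * (N.choose n : ℝ) * Real.exp (-2 * lam ^ 2 / V) := by linarith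

private lemma V_bound (m n : ℕ) (hm : 0 < m) : ∀ k, k ≤ n →
    ∑ j ∈ Finset.Icc 1 k, (1 / (((n + m : ℕ) : ℝ) - j)) ^ 2
      ≤ (m + 1 : ℝ) / m * (1 / (((n + m : ℕ) : ℝ) - k) - 1 / ((n + m : ℕ) : ℝ)) := by
  intro k
  induction k with
  | zero => intro _; simp
  | succ k ih =>
    intro hk
    have ihk := ih (by omega)
    rw [Finset.sum_Icc_succ_top (by omega : 1 ≤ k + 1)]
    have hm1 : (1 : ℝ) ≤ m := by exact_mod_cast hm
    set a : ℝ := ((n + m : ℕ) : ℝ) - (k + 1) with ha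
    have hma : (m : ℝ) ≤ a := by
      rw [ha]
      have : ((m : ℕ) : ℝ) + (k + 1 : ℝ) ≤ ((n + m : ℕ) : ℝ) := by
        push_cast; have : (k:ℝ) + 1 ≤ n := by exact_mod_cast hk
        linarith
      linarith
    have hapos : (0 : ℝ) < a := lt_of_lt_of_le (by linarith) hma
    have hstep : (1 / a) ^ 2 ≤ (m + 1 : ℝ) / m * (1 / a - 1 / (a + 1)) := by
      have hdiff : 1 / a - 1 / (a + 1) = 1 / (a * (a + 1)) := by
        field_simp
        ring
      rw [hdiff]
      have h1 : (1 / a) ^ 2 = 1 / a ^ 2 := by rw [div_pow, one_pow]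
      rw [h1, div_mul_div_comm, mul_one]
      rw [div_le_div_iff₀ (by positivity) (by positivity)]
      nlinarith
    have hcast : ((n + m : ℕ) : ℝ) - ((k + 1 : ℕ) : ℝ) = a := by rw [ha]; push_cast; ring
    have hcast2 : ((n + m : ℕ) : ℝ) - (k : ℝ) = a + 1 := by rw [ha]; push_cast; ring
    rw [hcast2] at ihk
    rw [hcast]
    calc (∑ j ∈ Finset.Icc 1 k, (1 / (((n + m : ℕ) : ℝ) - j)) ^ 2) + (1 / a) ^ 2
        ≤ (m + 1 : ℝ) / m * (1 / (a + 1) - 1 / ((n + m : ℕ) : ℝ)) + (1 / a) ^ 2 := by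
          linarith [ihk]
      _ ≤ (m + 1 : ℝ) / m * (1 / (a + 1) - 1 / ((n + m : ℕ) : ℝ))
            + (m + 1 : ℝ) / m * (1 / a - 1 / (a + 1)) := by linarith [hstep]
      _ = (m + 1 : ℝ) / m * (1 / a - 1 / ((n + m : ℕ) : ℝ)) := by ring


private lemma arith_key {δ mR nR : ℝ} (hδ : 0 < δ) (hm1 : 1 ≤ mR) (hn : mR + 1 ≤ nR) :
    δ ^ 2 * mR * (nR + mR) / (mR + nR + 2) * ((mR + 1) / mR * (1 / mR - 1 / (nR + mR)))
      ≤ 2 * (δ * nR / (nR + mR)) ^ 2 := by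
  have hmpos : (0 : ℝ) < mR := by linarith
  have hnpos : (0 : ℝ) < nR := by linarith
  have hNpos : (0 : ℝ) < nR + mR := by linarith
  have hdpos : (0 : ℝ) < mR + nR + 2 := by linarith
  have hpoly : (mR + 1) * (nR + mR) ^ 2 ≤ 2 * mR * nR * (mR + nR + 2) := by
    nlinarith [mul_nonneg (mul_nonneg (sub_nonneg.mpr hm1) hnpos.le)
        (sub_nonneg.mpr hn),
      mul_nonneg (by nlinarith : (0 : ℝ) ≤ mR ^ 2 + 2 * mR - 1) (sub_nonneg.mpr hn)]
  have h2 : δ ^ 2 * mR * (nR + mR) / (mR + nR + 2) * ((mR + 1) / mR * (1 / mR - 1 / (nR + mR)))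
      = δ ^ 2 * nR * (mR + 1) / ((mR + nR + 2) * mR) := by
    field_simp
    ring
  have h3 : 2 * (δ * nR / (nR + mR)) ^ 2 = 2 * δ ^ 2 * nR ^ 2 / (nR + mR) ^ 2 := by
    rw [div_pow]; ring
  rw [h2, h3, div_le_div_iff₀ (by positivity) (by positivity)]
  nlinarith [mul_le_mul_of_nonneg_left hpoly (by positivity : (0 : ℝ) ≤ δ ^ 2 * nR)]

end Aux

/-- Hoeffding-type bound on the error probability of the sampling strategy `Φ(d,m,n)`:
for a fixed string `q` of length `n+m`, the fraction of `m`-subsets `t` on which the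
estimate `w(q_t)` is more than `δ` away from `w(q_{-t})` is at most
`2 exp(-δ² m (n+m) / (m+n+2))`. -/
theorem sampling_error_bound (d m n : ℕ) (hm : 0 < m) (hmn : m < n) (δ : ℝ) (hδ : 0 < δ)
    (q : Fin (n + m) → Fin d) :
    (((Finset.univ.powersetCard m).filter fun t : Finset (Fin (n + m)) =>
        δ < |wOn q t - wOn q tᶜ|).card : ℝ) / ((n + m).choose m) ≤
      2 * Real.exp (-δ ^ 2 * m * (n + m) / (m + n + 2)) := by
  classical
  set A : Finset (Fin (n + m)) := Finset.univ.filter (fun ℓ => (q ℓ : ℕ) ≠ 0) with hA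
  have hnN : n < n + m := by omega
  have hn0 : 0 < n := by omega
  have hNR : (0 : ℝ) < ((n + m : ℕ) : ℝ) := by exact_mod_cast Nat.add_pos_right n hm
  have hnR : (0 : ℝ) < (n : ℝ) := by exact_mod_cast hn0
  have hmR : (0 : ℝ) < (m : ℝ) := by exact_mod_cast hm
  set lam : ℝ := δ * n / ((n + m : ℕ) : ℝ) with hlam
  have hlampos : 0 < lam := by positivity
  have hfilt : ∀ s : Finset (Fin (n + m)),
      s.filter (fun ℓ => (q ℓ : ℕ) ≠ 0) = s ∩ A := by
    intro s; ext ℓ; simp [hA]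
  have hNn : ((n + m : ℕ) : ℝ) - (n : ℝ) = (m : ℝ) := by push_cast; ring
  have htrans : ∀ t : Finset (Fin (n + m)),
      t ∈ Finset.powersetCard m (Finset.univ : Finset (Fin (n + m))) →
      ((δ < |wOn q t - wOn q tᶜ|) ↔ lam < |Zf A n tᶜ|) := by
    intro t ht
    have htc : t.card = m := (Finset.mem_powersetCard.mp ht).2
    have htcc : tᶜ.card = n := by
      rw [Finset.card_compl, htc, Fintype.card_fin]; omega
    have hxy : (t ∩ A).card + (tᶜ ∩ A).card = A.card := by
      have h1 : (A ∩ t).card + (A \ t).card = A.card := Finset.card_inter_add_card_sdiff A t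
      have e1 : A ∩ t = t ∩ A := Finset.inter_comm A t
      have e2 : A \ t = tᶜ ∩ A := by ext i; simp [Finset.mem_sdiff, and_comm]
      rw [e1, e2] at h1; exact h1
    have hwt : wOn q t = ((t ∩ A).card : ℝ) / m := by
      rw [wOn, hfilt t, htc]
    have hwc : wOn q tᶜ = ((tᶜ ∩ A).card : ℝ) / n := by
      rw [wOn, hfilt tᶜ, htcc]
    have hKr : (A.card : ℝ) = ((t ∩ A).card : ℝ) + ((tᶜ ∩ A).card : ℝ) := by
      exact_mod_cast hxy.symm
    have hident : wOn q t - wOn q tᶜ = -(((n + m : ℕ) : ℝ) / n * Zf A n tᶜ) := by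
      rw [hwt, hwc, Zf, hNn, hKr]
      field_simp
      push_cast
      ring
    rw [hident, abs_neg, abs_mul, abs_of_pos (div_pos hNR hnR),
      div_mul_eq_mul_div, lt_div_iff₀ hnR, hlam, div_lt_iff₀ hNR]
    constructor <;> intro h <;> nlinarith
  have hcard : ((Finset.powersetCard m (Finset.univ : Finset (Fin (n + m)))).filter
        fun t => δ < |wOn q t - wOn q tᶜ|).card
      = ((Finset.powersetCard n (Finset.univ : Finset (Fin (n + m)))).filter
        fun s => lam < |Zf A n s|).card := by
    apply Finset.card_bij (fun t _ => tᶜ)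
    · intro t ht
      rw [Finset.mem_filter] at ht ⊢
      have htc : t.card = m := (Finset.mem_powersetCard.mp ht.1).2
      refine ⟨Finset.mem_powersetCard.mpr ⟨Finset.subset_univ _, ?_⟩, (htrans t ht.1).mp ht.2⟩
      rw [Finset.card_compl, htc, Fintype.card_fin]; omega
    · intro t1 h1 t2 h2 he
      rw [← compl_compl t1, he, compl_compl]
    · intro s hs
      rw [Finset.mem_filter] at hs
      have hsc : sᶜ ∈ Finset.powersetCard m (Finset.univ : Finset (Fin (n + m))) := by
        refine Finset.mem_powersetCard.mpr ⟨Finset.subset_univ _, ?_⟩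
        rw [Finset.card_compl, (Finset.mem_powersetCard.mp hs.1).2, Fintype.card_fin]; omega
      refine ⟨sᶜ, ?_, by simp⟩
      rw [Finset.mem_filter]
      exact ⟨hsc, (htrans sᶜ hsc).mpr (by rw [compl_compl]; exact hs.2)⟩
  have htail := two_sided_tail A n hnN hn0 lam hlampos
  set V := ∑ j ∈ Finset.Icc 1 n, (1 / (((n + m : ℕ) : ℝ) - j)) ^ 2 with hV
  have hVpos : 0 < V := by
    rw [hV]
    apply Finset.sum_pos
    · intro j hj
      rw [Finset.mem_Icc] at hj
      have : (j : ℝ) < ((n + m : ℕ) : ℝ) := by exact_mod_cast lt_of_le_of_lt hj.2 hnN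
      have : (0 : ℝ) < ((n + m : ℕ) : ℝ) - j := by linarith
      positivity
    · exact ⟨1, Finset.mem_Icc.mpr ⟨le_refl 1, hn0⟩⟩
  have hVB := V_bound m n hm n le_rfl
  rw [hNn] at hVB
  have hexp : -2 * lam ^ 2 / V ≤ -δ ^ 2 * m * (n + m : ℕ) / (m + n + 2) := by
    have hNe : ((n + m : ℕ) : ℝ) = (n : ℝ) + m := by push_cast; ring
    have hm1 : (1 : ℝ) ≤ (m : ℝ) := by exact_mod_cast hm
    have hnm1 : (m : ℝ) + 1 ≤ (n : ℝ) := by exact_mod_cast hmn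
    have h1 : δ ^ 2 * (m : ℝ) * ((n + m : ℕ) : ℝ) / ((m : ℝ) + n + 2) ≤ 2 * lam ^ 2 / V := by
      rw [le_div_iff₀ hVpos]
      have hmono : δ ^ 2 * (m : ℝ) * ((n + m : ℕ) : ℝ) / ((m : ℝ) + n + 2) * V
          ≤ δ ^ 2 * (m : ℝ) * ((n + m : ℕ) : ℝ) / ((m : ℝ) + n + 2) *
            (((m : ℝ) + 1) / m * (1 / (m : ℝ) - 1 / ((n + m : ℕ) : ℝ))) :=
        mul_le_mul_of_nonneg_left hVB (by positivity)
      refine hmono.trans ?_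
      rw [hlam, hNe]
      exact arith_key hδ hm1 hnm1
    have e1 : -2 * lam ^ 2 / V = -(2 * lam ^ 2 / V) := by ring
    have e2 : -δ ^ 2 * (m : ℝ) * ((n + m : ℕ) : ℝ) / ((m : ℝ) + n + 2)
        = -(δ ^ 2 * (m : ℝ) * ((n + m : ℕ) : ℝ) / ((m : ℝ) + n + 2)) := by ring
    rw [e1, e2]
    exact neg_le_neg h1
  have hNe' : ((n + m : ℕ) : ℝ) = (n : ℝ) + (m : ℝ) := by push_cast; ring
  rw [hNe'] at hexp
  have hchoosepos : (0 : ℝ) < (((n + m).choose m : ℕ) : ℝ) := by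
    exact_mod_cast Nat.choose_pos (by omega : m ≤ n + m)
  have hsymm : (n + m).choose n = (n + m).choose m := by
    rw [← Nat.choose_symm (by omega : m ≤ n + m)]
    congr 1
    omega
  rw [div_le_iff₀ hchoosepos]
  calc ((((Finset.univ.powersetCard m).filter fun t : Finset (Fin (n + m)) =>
        δ < |wOn q t - wOn q tᶜ|).card : ℕ) : ℝ)
      = ((((Finset.powersetCard n (Finset.univ : Finset (Fin (n + m)))).filter
          fun s => lam < |Zf A n s|).card : ℕ) : ℝ) := by rw [hcard]
    _ ≤ 2 * ((n + m).choose n : ℝ) * Real.exp (-2 * lam ^ 2 / V) := htail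
    _ ≤ 2 * ((n + m).choose n : ℝ) *
          Real.exp (-δ ^ 2 * m * ((n : ℝ) + (m : ℝ)) / ((m : ℝ) + n + 2)) := by
        apply mul_le_mul_of_nonneg_left (Real.exp_le_exp.mpr hexp)
        positivity
    _ = 2 * Real.exp (-δ ^ 2 * m * (n + m) / (m + n + 2)) * ((n + m).choose m : ℝ) := by
        rw [hsymm]; ring
end
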